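/- Let k₁ > k₂ > 0 and define ψ : ℝ₋² → ℝ by ψ(t₁,t₂) = max(k₁t₁, k₂t₂). Then Θ_ψ := {a ∈ ℝ₊²̄ : ∃ t ∈ ℝ₋², a₁t₁ + a₂t₂ ≥ ψ(t)} equals the triangle {a ∈ ℝ₊²̄ : a₁/k₁ + a₂/k₂ ≤ 1}, and hence 2!·Vol(Θ_ψ) = k₁k₂. -/

import Mathlib

open MeasureTheory

/-- For `ψ(t) = max(k₁t₁, k₂t₂)` with `k₁ > k₂ > 0`, the set
`Θ_ψ` is the triangle `{a ≥ 0 : a₁/k₁ + a₂/k₂ ≤ 1}`, whose volume times `2!`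
equals `k₁k₂`. -/
theorem stmt11 (k₁ k₂ : ℝ) (hk : k₁ > k₂) (hk₂ : k₂ > 0)
    (ψ : (Fin 2 → ℝ) → ℝ) (hψ : ∀ t, ψ t = max (k₁ * t 0) (k₂ * t 1)) :
    {a : Fin 2 → ℝ | (∀ k, 0 ≤ a k) ∧
        ∃ t : Fin 2 → ℝ, (∀ k, t k < 0) ∧ ψ t ≤ a 0 * t 0 + a 1 * t 1} =
      {a : Fin 2 → ℝ | (∀ k, 0 ≤ a k) ∧ a 0 / k₁ + a 1 / k₂ ≤ 1} ∧
    2 * volume {a : Fin 2 → ℝ | (∀ k, 0 ≤ a k) ∧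
        ∃ t : Fin 2 → ℝ, (∀ k, t k < 0) ∧ ψ t ≤ a 0 * t 0 + a 1 * t 1} =
      ENNReal.ofReal (k₁ * k₂) := by
  have hk₁ : k₁ > 0 := lt_trans hk₂ hk
  have hseteq : {a : Fin 2 → ℝ | (∀ k, 0 ≤ a k) ∧
        ∃ t : Fin 2 → ℝ, (∀ k, t k < 0) ∧ ψ t ≤ a 0 * t 0 + a 1 * t 1} =
      {a : Fin 2 → ℝ | (∀ k, 0 ≤ a k) ∧ a 0 / k₁ + a 1 / k₂ ≤ 1} := by
    ext a
    simp only [Set.mem_setOf_eq]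
    constructor
    · rintro ⟨ha, t, ht, hle⟩
      refine ⟨ha, ?_⟩
      rw [hψ t, max_le_iff] at hle
      obtain ⟨h1, h2⟩ := hle
      have ha0 := ha 0
      have ha1 := ha 1
      have ht0 := ht 0
      have ht1 := ht 1
      have hka : a 0 ≤ k₁ := by nlinarith [mul_nonneg ha1 (neg_nonneg.2 ht1.le)]
      have key : a 0 * a 1 ≤ (k₁ - a 0) * (k₂ - a 1) := by
        nlinarith [mul_le_mul_of_nonneg_left h2 (sub_nonneg.2 hka),
          mul_le_mul_of_nonneg_left h1 ha0]
      rw [div_add_div _ _ (ne_of_gt hk₁) (ne_of_gt hk₂), div_le_one (by positivity)]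
      nlinarith
    · rintro ⟨ha, hle⟩
      refine ⟨ha, fun i => if i = 0 then -(1/k₁) else -(1/k₂), ?_, ?_⟩
      · intro i
        by_cases h : i = 0 <;> simp [h] <;> positivity
      · rw [hψ]
        simp only [show ((0:Fin 2) = 0) = True by simp, show ((1:Fin 2) = 0) = False by simp,
          if_true, if_false]
        have e1 : k₁ * -(1/k₁) = -1 := by field_simp
        have e2 : k₂ * -(1/k₂) = -1 := by field_simp
        rw [e1, e2, max_self]
        have : a 0 * -(1/k₁) + a 1 * -(1/k₂) = -(a 0 / k₁ + a 1 / k₂) := by ring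
        rw [this]
        linarith
  refine ⟨hseteq, ?_⟩
  rw [hseteq]
  -- transfer to ℝ × ℝ
  set T : Set (ℝ × ℝ) := {p : ℝ × ℝ | 0 ≤ p.1 ∧ 0 ≤ p.2 ∧ p.1 / k₁ + p.2 / k₂ ≤ 1} with hTdef
  have hT : MeasurableSet T := by
    apply MeasurableSet.inter (measurableSet_le measurable_const measurable_fst)
    apply MeasurableSet.inter (measurableSet_le measurable_const measurable_snd)
    exact measurableSet_le ((measurable_fst.div_const k₁).add (measurable_snd.div_const k₂)) measurable_const
  have hpre : (MeasurableEquiv.finTwoArrow : (Fin 2 → ℝ) ≃ᵐ ℝ × ℝ) ⁻¹' T =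
      {a : Fin 2 → ℝ | (∀ k, 0 ≤ a k) ∧ a 0 / k₁ + a 1 / k₂ ≤ 1} := by
    ext a
    simp [MeasurableEquiv.finTwoArrow, Fin.forall_fin_two, hTdef, and_assoc]
  have hvol : volume {a : Fin 2 → ℝ | (∀ k, 0 ≤ a k) ∧ a 0 / k₁ + a 1 / k₂ ≤ 1} = volume T := by
    rw [← hpre]
    exact (volume_preserving_finTwoArrow ℝ).measure_preimage hT.nullMeasurableSet
  rw [hvol]
  -- Fubini
  have hsl : ∀ x : ℝ, volume (Prod.mk x ⁻¹' T) =
      Set.indicator (Set.Icc 0 k₁) (fun x => ENNReal.ofReal (k₂ * (1 - x / k₁))) x := by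
    intro x
    by_cases hx : x ∈ Set.Icc (0:ℝ) k₁
    · rw [Set.indicator_of_mem hx]
      have : Prod.mk x ⁻¹' T = Set.Icc 0 (k₂ * (1 - x / k₁)) := by
        ext y
        simp only [Set.mem_preimage, hTdef, Set.mem_setOf_eq, Set.mem_Icc]
        have heq : k₂ * (1 - x / k₁) = (k₁ * k₂ - k₂ * x) / k₁ := by field_simp
        constructor
        · rintro ⟨_, hy, hsum⟩
          refine ⟨hy, ?_⟩
          rw [div_add_div _ _ (ne_of_gt hk₁) (ne_of_gt hk₂)] at hsum
          rw [div_le_one (by positivity)] at hsum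
          rw [heq, le_div_iff₀ hk₁]
          nlinarith
        · rintro ⟨hy, hy2⟩
          refine ⟨hx.1, hy, ?_⟩
          rw [heq, le_div_iff₀ hk₁] at hy2
          rw [div_add_div _ _ (ne_of_gt hk₁) (ne_of_gt hk₂), div_le_one (by positivity)]
          nlinarith
      rw [this, Real.volume_Icc, sub_zero]
    · rw [Set.indicator_of_notMem hx]
      have : Prod.mk x ⁻¹' T = ∅ := by
        ext y
        simp only [Set.mem_preimage, hTdef, Set.mem_setOf_eq, Set.mem_empty_iff_false, iff_false]
        rintro ⟨hx0, hy0, hsum⟩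
        apply hx
        refine ⟨hx0, ?_⟩
        by_contra hxk
        push_neg at hxk
        have : (1:ℝ) < x / k₁ := (one_lt_div hk₁).2 hxk
        have : (0:ℝ) ≤ y / k₂ := by positivity
        linarith
      rw [this, measure_empty]
  rw [Measure.volume_eq_prod, Measure.prod_apply hT]
  rw [lintegral_congr hsl, lintegral_indicator measurableSet_Icc]
  have hint : IntegrableOn (fun x => k₂ * (1 - x / k₁)) (Set.Icc 0 k₁) volume :=
    (Continuous.integrableOn_Icc (by fun_prop))
  have hnn : 0 ≤ᵐ[volume.restrict (Set.Icc 0 k₁)] fun x => k₂ * (1 - x / k₁) := by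
    refine ae_restrict_of_forall_mem measurableSet_Icc ?_
    intro x hx
    have : x / k₁ ≤ 1 := (div_le_one hk₁).2 hx.2
    have : 0 ≤ 1 - x / k₁ := by linarith
    positivity
  rw [← ofReal_integral_eq_lintegral_ofReal hint hnn]
  have hcalc : ∫ x in Set.Icc (0:ℝ) k₁, k₂ * (1 - x / k₁) = k₁ * k₂ / 2 := by
    rw [MeasureTheory.integral_Icc_eq_integral_Ioc, ← intervalIntegral.integral_of_le hk₁.le]
    have : ∀ x : ℝ, k₂ * (1 - x / k₁) = k₂ - (k₂ / k₁) * x := by intro x; field_simp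
    simp_rw [this]
    rw [intervalIntegral.integral_sub (intervalIntegrable_const)
      ((by continuity : Continuous fun x : ℝ => k₂ / k₁ * x).intervalIntegrable _ _)]
    rw [intervalIntegral.integral_const_mul, integral_id, intervalIntegral.integral_const]
    field_simp
    ring
  rw [hcalc]
  rw [show (2 : ENNReal) = ENNReal.ofReal 2 by simp, ← ENNReal.ofReal_mul (by norm_num)]
  congr 1
  ring
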